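/- Let K be the middle-third Cantor set, T(x) = 3x mod 1, and μ the Bernoulli measure on K associated to a probability vector (p₁, p₂) with p₁ ≠ p₂. Let ψ_α(n) = 3^{−⌊α log n⌋}. If 1/(−(p₁ log p₁ + p₂ log p₂)) < α < 1/(−log(p₁² + p₂²)), then ∑_{n=1}^∞ μ(R_n(T, ψ_α)) = ∞ while μ(R(T, ψ_α)) = 0, where R_n(T,ψ) := {x ∈ K : Tⁿx ∈ B(x, ψ(n))} and R(T,ψ) = limsup R_n. -/

import Mathlib

open MeasureTheory Filter Set Metric
open scoped ENNReal Topology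

namespace ABB14

noncomputable def val (w : List Bool) : ℝ :=
  w.foldr (fun b r => (r + if b then 2 else 0) / 3) 0

@[simp] lemma val_nil : val [] = 0 := rfl
@[simp] lemma val_cons (b : Bool) (w : List Bool) :
    val (b :: w) = (val w + if b then 2 else 0) / 3 := rfl

noncomputable def wt (p₁ p₂ : ℝ) (w : List Bool) : ℝ :=
  w.foldr (fun b r => (if b then p₂ else p₁) * r) 1

@[simp] lemma wt_nil (p₁ p₂ : ℝ) : wt p₁ p₂ [] = 1 := rfl
@[simp] lemma wt_cons (p₁ p₂ : ℝ) (b : Bool) (w : List Bool) :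
    wt p₁ p₂ (b :: w) = (if b then p₂ else p₁) * wt p₁ p₂ w := rfl

def cube (w : List Bool) : Set ℝ := Set.Icc (val w) (val w + (3:ℝ)⁻¹ ^ w.length)

def words : ℕ → Finset (List Bool)
  | 0 => {[]}
  | k+1 => (words k).image (List.cons false) ∪ (words k).image (List.cons true)

lemma mem_words {k : ℕ} {w : List Bool} : w ∈ words k ↔ w.length = k := by
  induction k generalizing w with
  | zero => simp [words, List.length_eq_zero_iff]
  | succ k ih =>
    simp only [words, Finset.mem_union, Finset.mem_image]
    constructor
    · rintro (⟨t, ht, rfl⟩ | ⟨t, ht, rfl⟩) <;> simp [ih.1 ht]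
    · intro hw
      match w with
      | [] => simp at hw
      | b :: t =>
        have ht : t ∈ words k := ih.2 (by simpa using hw)
        cases b
        · exact Or.inl ⟨t, ht, rfl⟩
        · exact Or.inr ⟨t, ht, rfl⟩

lemma val_nonneg (w : List Bool) : 0 ≤ val w := by
  induction w with
  | nil => simp
  | cons b t ih => simp only [val_cons]; cases b <;> simp <;> positivity

lemma val_add_le_one (w : List Bool) : val w + (3:ℝ)⁻¹ ^ w.length ≤ 1 := by
  induction w with
  | nil => norm_num
  | cons b t ih =>
    simp only [val_cons, List.length_cons, pow_succ]
    have hb : (if b then (2:ℝ) else 0) ≤ 2 := by cases b <;> norm_num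
    nlinarith [val_nonneg t]

lemma val_le_one (w : List Bool) : val w ≤ 1 := by
  have h : (0:ℝ) < (3:ℝ)⁻¹ ^ w.length := by positivity
  linarith [val_add_le_one w]

lemma val_append (u v : List Bool) :
    val (u ++ v) = val u + (3:ℝ)⁻¹ ^ u.length * val v := by
  induction u with
  | nil => simp
  | cons b t ih =>
    simp only [List.cons_append, val_cons, ih, List.length_cons, pow_succ]
    ring

lemma three_pow_val_int (w : List Bool) : ∃ z : ℤ, (3:ℝ) ^ w.length * val w = z := by
  induction w with
  | nil => exact ⟨0, by simp⟩
  | cons b t ih =>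
    obtain ⟨z, hz⟩ := ih
    refine ⟨z + 3 ^ t.length * (if b then 2 else 0), ?_⟩
    simp only [val_cons, List.length_cons, pow_succ]
    push_cast
    cases b <;> simp <;> nlinarith

lemma cube_subset_prefix (u v : List Bool) : cube (u ++ v) ⊆ cube u := by
  intro x hx
  obtain ⟨h1, h2⟩ := hx
  rw [val_append] at h1 h2
  have h3 : (0:ℝ) < (3:ℝ)⁻¹ ^ u.length := by positivity
  constructor
  · nlinarith [val_nonneg v]
  · have h4 := val_add_le_one v
    have h5 : (3:ℝ)⁻¹ ^ (u ++ v).length = (3:ℝ)⁻¹ ^ u.length * (3:ℝ)⁻¹ ^ v.length := by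
      rw [List.length_append, pow_add]
    rw [h5] at h2
    nlinarith

lemma mem_cube_cons {c : Bool} {w : List Bool} {y : ℝ} (hy : y ∈ cube (c :: w)) :
    (if c then (2:ℝ) else 0) / 3 ≤ y ∧
      y ≤ ((if c then (2:ℝ) else 0) + 1) / 3 := by
  obtain ⟨h1, h2⟩ := hy
  simp only [val_cons, List.length_cons, pow_succ] at h1 h2
  have h3 : (0:ℝ) < (3:ℝ)⁻¹ ^ w.length := by positivity
  constructor
  · nlinarith [val_nonneg w]
  · nlinarith [val_add_le_one w]

lemma mem_cube_cons_tail {c : Bool} {w : List Bool} {y : ℝ} (hy : y ∈ cube (c :: w)) :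
    3 * y - (if c then (2:ℝ) else 0) ∈ cube w := by
  obtain ⟨h1, h2⟩ := hy
  simp only [val_cons, List.length_cons, pow_succ] at h1 h2
  constructor <;> [nlinarith; nlinarith]

lemma cube_disjoint : ∀ (u v : List Bool), u.length = v.length → u ≠ v →
    Disjoint (cube u) (cube v) := by
  intro u
  induction u with
  | nil => intro v h hne; exact absurd (List.length_eq_zero_iff.1 h.symm).symm hne
  | cons a t ih =>
    intro v h hne
    match v with
    | [] => simp at h
    | b :: s =>
      rw [Set.disjoint_left]
      intro x hx hx'
      have hls : t.length = s.length := by simpa using h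
      by_cases hab : a = b
      · subst hab
        have hts : t ≠ s := by rintro rfl; exact hne rfl
        exact Set.disjoint_left.1 (ih s hls hts) (mem_cube_cons_tail hx) (mem_cube_cons_tail hx')
      · obtain ⟨h1, h2⟩ := mem_cube_cons hx
        obtain ⟨h1', h2'⟩ := mem_cube_cons hx'
        cases a <;> cases b <;> simp at hab h1 h2 h1' h2' <;> linarith

lemma wt_pos {p₁ p₂ : ℝ} (hp₁ : 0 < p₁) (hp₂ : 0 < p₂) (w : List Bool) : 0 < wt p₁ p₂ w := by
  induction w with
  | nil => norm_num
  | cons b t ih => simp only [wt_cons]; cases b <;> simp <;> positivity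

lemma wt_append (p₁ p₂ : ℝ) (u v : List Bool) :
    wt p₁ p₂ (u ++ v) = wt p₁ p₂ u * wt p₁ p₂ v := by
  induction u with
  | nil => simp
  | cons b t ih => simp [ih]; ring

lemma wt_le {p₁ p₂ : ℝ} (hp₁ : 0 < p₁) (hp₂ : 0 < p₂) (w : List Bool) :
    wt p₁ p₂ w ≤ max p₁ p₂ ^ w.length := by
  induction w with
  | nil => simp
  | cons b t ih =>
    simp only [wt_cons, List.length_cons, pow_succ]
    have h1 : (if b then p₂ else p₁) ≤ max p₁ p₂ := by cases b <;> simp [le_max_left, le_max_right]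
    have h2 : (0:ℝ) < (if b then p₂ else p₁) := by cases b <;> simpa
    have h3 := wt_pos hp₁ hp₂ t
    nlinarith [le_trans h3.le ih]

lemma sum_wt_rpow {p₁ p₂ : ℝ} (hp₁ : 0 < p₁) (hp₂ : 0 < p₂) (c : ℝ) (k : ℕ) :
    ∑ w ∈ words k, wt p₁ p₂ w ^ c = (p₁ ^ c + p₂ ^ c) ^ k := by
  induction k with
  | zero => simp [words]
  | succ k ih =>
    have hdisj : Disjoint ((words k).image (List.cons false)) ((words k).image (List.cons true)) := by
      rw [Finset.disjoint_left]
      rintro w hw hw'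
      obtain ⟨t, _, rfl⟩ := Finset.mem_image.1 hw
      obtain ⟨t', _, h⟩ := Finset.mem_image.1 hw'
      simp at h
    have hinj : ∀ b : Bool, Set.InjOn (List.cons b) (words k) := fun b x _ y _ h => by
      simpa using h
    rw [words, Finset.sum_union hdisj, Finset.sum_image (hinj false), Finset.sum_image (hinj true)]
    have e1 : ∀ w ∈ words k, wt p₁ p₂ (false :: w) ^ c = p₁ ^ c * wt p₁ p₂ w ^ c := by
      intro w _
      rw [wt_cons, if_neg Bool.false_ne_true, Real.mul_rpow hp₁.le (wt_pos hp₁ hp₂ w).le]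
    have e2 : ∀ w ∈ words k, wt p₁ p₂ (true :: w) ^ c = p₂ ^ c * wt p₁ p₂ w ^ c := by
      intro w _
      rw [wt_cons, if_pos rfl, Real.mul_rpow hp₂.le (wt_pos hp₁ hp₂ w).le]
    rw [Finset.sum_congr rfl e1, Finset.sum_congr rfl e2, ← Finset.mul_sum, ← Finset.mul_sum, ih]
    ring

variable {K : Set ℝ} (hKcompact : IsCompact K) (hKne : K.Nonempty)
  (hKself : K = (fun x : ℝ => x / 3) '' K ∪ (fun x : ℝ => (x + 2) / 3) '' K)
include hKcompact hKne hKself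

lemma hKcases : ∀ z ∈ K, (∃ y ∈ K, y / 3 = z) ∨ (∃ y ∈ K, (y + 2) / 3 = z) := by
  intro z hz
  rw [hKself] at hz
  rcases hz with ⟨y, hy, h⟩ | ⟨y, hy, h⟩
  · exact Or.inl ⟨y, hy, h⟩
  · exact Or.inr ⟨y, hy, h⟩

omit hKcompact hKne in
lemma hKmemL : ∀ z ∈ K, z / 3 ∈ K := by
  intro z hz
  have : z / 3 ∈ (fun x : ℝ => x / 3) '' K ∪ (fun x : ℝ => (x + 2) / 3) '' K :=
    Or.inl ⟨z, hz, rfl⟩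
  rwa [← hKself] at this

omit hKcompact hKne in
lemma hKmemR : ∀ z ∈ K, (z + 2) / 3 ∈ K := by
  intro z hz
  have : (z + 2) / 3 ∈ (fun x : ℝ => x / 3) '' K ∪ (fun x : ℝ => (x + 2) / 3) '' K :=
    Or.inr ⟨z, hz, rfl⟩
  rwa [← hKself] at this

lemma one_mem_K : 1 ∈ K ∧ K ⊆ Set.Icc 0 1 ∧ 0 ∈ K := by
  have hM : sSup K ∈ K := hKcompact.sSup_mem hKne
  have hm : sInf K ∈ K := hKcompact.sInf_mem hKne
  have hub : ∀ y ∈ K, y ≤ sSup K := fun y hy => le_csSup hKcompact.bddAbove hy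
  have hlb : ∀ y ∈ K, sInf K ≤ y := fun y hy => csInf_le hKcompact.bddBelow hy
  have hM1 : 1 ≤ sSup K := by have := hub _ (hKmemR hKself _ hM); linarith
  have hm0 : sInf K ≤ 0 := by have := hlb _ (hKmemL hKself _ hm); linarith
  have hMle : sSup K ≤ 1 := by
    rcases hKcases hKcompact hKne hKself _ hM with ⟨y, hy, h⟩ | ⟨y, hy, h⟩
    · have := hub y hy; nlinarith
    · have := hub y hy; linarith
  have hmge : 0 ≤ sInf K := by
    rcases hKcases hKcompact hKne hKself _ hm with ⟨y, hy, h⟩ | ⟨y, hy, h⟩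
    · have := hlb y hy; linarith
    · have := hlb y hy; linarith
  have hMeq : sSup K = 1 := le_antisymm hMle hM1
  have hmeq : sInf K = 0 := le_antisymm hm0 hmge
  refine ⟨hMeq ▸ hM, fun y hy => ⟨hmeq ▸ hlb y hy, hMeq ▸ hub y hy⟩, hmeq ▸ hm⟩

variable {T : ℝ → ℝ} (hT : ∀ x, T x = Int.fract (3 * x))
include hT

set_option linter.unusedSectionVars false

lemma T_iter (n : ℕ) (x : ℝ) (hn : n ≠ 0) : T^[n] x = Int.fract ((3:ℝ) ^ n * x) := by
  induction n with
  | zero => simp at hn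
  | succ n ih =>
    rcases Nat.eq_zero_or_pos n with rfl | hpos
    · simp [hT, pow_one]
    · rw [Function.iterate_succ_apply', ih hpos.ne', hT]
      have : (3:ℝ) * Int.fract ((3:ℝ)^n * x) = 3 * ((3:ℝ)^n * x) - (3 * ⌊(3:ℝ)^n * x⌋ : ℤ) := by
        rw [Int.fract]; push_cast; ring
      rw [this, Int.fract_sub_intCast]
      ring_nf

lemma T_mem_K (x : ℝ) (hx : x ∈ K) : T x ∈ K := by
  obtain ⟨h1K, hsub, h0K⟩ := one_mem_K hKcompact hKne hKself
  rcases hKcases hKcompact hKne hKself _ hx with ⟨y, hy, h⟩ | ⟨y, hy, h⟩ <;> subst h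
  · rw [hT]
    have h3 : 3 * (y / 3) = y := by ring
    rw [h3]
    rcases eq_or_lt_of_le (hsub hy).2 with h1 | h1
    · rw [h1]; simpa [Int.fract_one] using h0K
    · rwa [Int.fract_eq_self.2 ⟨(hsub hy).1, h1⟩]
  · rw [hT]
    have h3 : 3 * ((y+2) / 3) = y + 2 := by ring
    rw [h3]
    have h2 : Int.fract (y + 2) = Int.fract y := by
      have : y + 2 = y + (2:ℤ) := by push_cast; ring
      rw [this, Int.fract_add_intCast]
    rw [h2]
    rcases eq_or_lt_of_le (hsub hy).2 with h1 | h1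
    · rw [h1]; simpa [Int.fract_one] using h0K
    · rwa [Int.fract_eq_self.2 ⟨(hsub hy).1, h1⟩]

lemma T_iter_mem_K (n : ℕ) (x : ℝ) (hx : x ∈ K) : T^[n] x ∈ K := by
  induction n with
  | zero => simpa
  | succ n ih => rw [Function.iterate_succ_apply']; exact T_mem_K hKcompact hKne hKself hT _ ih

end ABB14

namespace ABB14

lemma mem_cube_cons_of {b : Bool} {w : List Bool} {y : ℝ} (hy : y ∈ cube w) :
    (y + if b then 2 else 0) / 3 ∈ cube (b :: w) := by
  obtain ⟨h1, h2⟩ := hy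
  constructor <;> simp only [val_cons, List.length_cons, pow_succ] <;> nlinarith

section
set_option linter.unusedSectionVars false
variable {K : Set ℝ} (hKcompact : IsCompact K) (hKne : K.Nonempty)
  (hKself : K = (fun x : ℝ => x / 3) '' K ∪ (fun x : ℝ => (x + 2) / 3) '' K)
include hKcompact hKne hKself

lemma cover : ∀ (k : ℕ), ∀ x ∈ K, ∃ w ∈ words k, x ∈ cube w := by
  intro k
  induction k with
  | zero =>
    intro x hx
    refine ⟨[], by simp [mem_words], ?_⟩
    have h := (one_mem_K hKcompact hKne hKself).2.1 hx
    simpa [cube] using h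
  | succ k ih =>
    intro x hx
    rcases hKcases hKcompact hKne hKself _ hx with ⟨y, hy, h⟩ | ⟨y, hy, h⟩
    · obtain ⟨w, hw, hyw⟩ := ih y hy
      refine ⟨false :: w, by simp [mem_words, mem_words.1 hw], ?_⟩
      have := mem_cube_cons_of (b := false) hyw
      simpa [← h] using this
    · obtain ⟨w, hw, hyw⟩ := ih y hy
      refine ⟨true :: w, by simp [mem_words, mem_words.1 hw], ?_⟩
      have := mem_cube_cons_of (b := true) hyw
      simpa [← h] using this

lemma separation : ∀ (m : ℕ), ∀ x ∈ K, ∀ y ∈ K, |x - y| < (3:ℝ)⁻¹ ^ m →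
    ∃ w ∈ words m, x ∈ cube w ∧ y ∈ cube w := by
  intro m
  induction m with
  | zero =>
    intro x hx y hy _
    have hsub := (one_mem_K hKcompact hKne hKself).2.1
    exact ⟨[], by simp [mem_words], by simpa [cube] using hsub hx, by simpa [cube] using hsub hy⟩
  | succ m ih =>
    intro x hx y hy hxy
    have hsub := (one_mem_K hKcompact hKne hKself).2.1
    have hpow : (0:ℝ) < (3:ℝ)⁻¹ ^ m := by positivity
    have hpow1 : (3:ℝ)⁻¹ ^ m ≤ 1 := pow_le_one₀ (by norm_num) (by norm_num)
    rcases hKcases hKcompact hKne hKself _ hx with ⟨x', hx', hex⟩ | ⟨x', hx', hex⟩ <;>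
      rcases hKcases hKcompact hKne hKself _ hy with ⟨y', hy', hey⟩ | ⟨y', hy', hey⟩
    · -- both left
      obtain ⟨w, hw, h1, h2⟩ := ih x' hx' y' hy' (by
        rw [← hex, ← hey] at hxy
        rw [show x' - y' = 3 * (x'/3 - y'/3) by ring, abs_mul]
        simp only [pow_succ] at hxy
        rw [abs_of_nonneg (by norm_num : (0:ℝ) ≤ 3)]
        nlinarith [abs_nonneg (x'/3 - y'/3)])
      refine ⟨false :: w, by simp [mem_words, mem_words.1 hw], ?_, ?_⟩
      · have := mem_cube_cons_of (b := false) h1; simpa [← hex] using this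
      · have := mem_cube_cons_of (b := false) h2; simpa [← hey] using this
    · -- x left, y right : contradiction
      exfalso
      have hx3 : x ≤ 1/3 := by rw [← hex]; have := (hsub hx').2; linarith
      have hy3 : 2/3 ≤ y := by rw [← hey]; have := (hsub hy').1; linarith
      have : (1:ℝ)/3 ≤ |x - y| := by rw [abs_sub_comm, abs_of_nonneg (by linarith)]; linarith
      simp only [pow_succ] at hxy
      nlinarith
    · exfalso
      have hy3 : y ≤ 1/3 := by rw [← hey]; have := (hsub hy').2; linarith
      have hx3 : 2/3 ≤ x := by rw [← hex]; have := (hsub hx').1; linarith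
      have : (1:ℝ)/3 ≤ |x - y| := by rw [abs_of_nonneg (by linarith)]; linarith
      simp only [pow_succ] at hxy
      nlinarith
    · -- both right
      obtain ⟨w, hw, h1, h2⟩ := ih x' hx' y' hy' (by
        rw [← hex, ← hey] at hxy
        rw [show x' - y' = 3 * ((x'+2)/3 - (y'+2)/3) by ring, abs_mul]
        simp only [pow_succ] at hxy
        rw [abs_of_nonneg (by norm_num : (0:ℝ) ≤ 3)]
        nlinarith [abs_nonneg ((x'+2)/3 - (y'+2)/3)])
      refine ⟨true :: w, by simp [mem_words, mem_words.1 hw], ?_, ?_⟩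
      · have := mem_cube_cons_of (b := true) h1; simpa [← hex] using this
      · have := mem_cube_cons_of (b := true) h2; simpa [← hey] using this
end
end ABB14

namespace ABB14

lemma preimage_div_Icc (a b : ℝ) : (fun x : ℝ => x / 3) ⁻¹' Set.Icc a b = Set.Icc (3*a) (3*b) := by
  ext x
  simp only [Set.mem_preimage, Set.mem_Icc]
  constructor <;> rintro ⟨h1, h2⟩ <;> constructor <;> linarith

lemma preimage_aff_Icc (a b : ℝ) :
    (fun x : ℝ => (x + 2) / 3) ⁻¹' Set.Icc a b = Set.Icc (3*a - 2) (3*b - 2) := by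
  ext x
  simp only [Set.mem_preimage, Set.mem_Icc]
  constructor <;> rintro ⟨h1, h2⟩ <;> constructor <;> linarith

section
set_option linter.unusedSectionVars false
variable {p₁ p₂ : ℝ} (hp₁ : 0 < p₁) (hp₂ : 0 < p₂) (hsum : p₁ + p₂ = 1)
  {K : Set ℝ} (hKcompact : IsCompact K) (hKne : K.Nonempty)
  (hKself : K = (fun x : ℝ => x / 3) '' K ∪ (fun x : ℝ => (x + 2) / 3) '' K)
  {μ : Measure ℝ} [IsProbabilityMeasure μ] (hμK : μ K = 1)
  (hμself : μ = ENNReal.ofReal p₁ • μ.map (fun x : ℝ => x / 3) +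
      ENNReal.ofReal p₂ • μ.map (fun x : ℝ => (x + 2) / 3))
include hp₁ hp₂ hsum hKcompact hKne hKself hμK hμself

lemma mu_compl : μ Kᶜ = 0 := by
  rw [measure_compl hKcompact.measurableSet (measure_ne_top μ K), hμK, measure_univ, tsub_self]

lemma mu_null_disj {A : Set ℝ} (hA : ∀ x ∈ A, x ∉ K) : μ A = 0 :=
  le_antisymm (le_trans (measure_mono (fun x hx => hA x hx)) (le_of_eq
    (mu_compl hp₁ hp₂ hsum hKcompact hKne hKself hμK hμself))) (zero_le)

lemma mu_inter_K (A : Set ℝ) : μ (A ∩ K) = μ A := by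
  have h0 := mu_compl hp₁ hp₂ hsum hKcompact hKne hKself hμK hμself
  exact measure_inter_conull h0

lemma mu_cube (w : List Bool) : μ (cube w) = ENNReal.ofReal (wt p₁ p₂ w) := by
  have hsub := (one_mem_K hKcompact hKne hKself).2.1
  have m1 : Measurable (fun x : ℝ => x / 3) := measurable_id.div_const 3
  have m2 : Measurable (fun x : ℝ => (x + 2) / 3) := (measurable_id.add_const 2).div_const 3
  have hmap : ∀ A : Set ℝ, MeasurableSet A →
      μ A = ENNReal.ofReal p₁ * μ ((fun x : ℝ => x / 3) ⁻¹' A) +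
        ENNReal.ofReal p₂ * μ ((fun x : ℝ => (x + 2) / 3) ⁻¹' A) := by
    intro A hA
    conv_lhs => rw [hμself]
    rw [Measure.add_apply, Measure.smul_apply, Measure.smul_apply,
      Measure.map_apply m1 hA, Measure.map_apply m2 hA, smul_eq_mul, smul_eq_mul]
  induction w with
  | nil =>
    simp only [cube, List.length_nil, pow_zero, val_nil, zero_add, wt_nil, ENNReal.ofReal_one]
    refine le_antisymm (prob_le_one (μ := μ)) ?_
    rw [← hμK]
    exact measure_mono hsub
  | cons b t ih =>
    have hlen : (3:ℝ)⁻¹ ^ (b :: t).length = (3:ℝ)⁻¹ ^ t.length / 3 := by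
      rw [List.length_cons, pow_succ]; ring
    have hcube : cube (b :: t) = Set.Icc ((val t + if b then 2 else 0)/3)
        ((val t + (if b then 2 else 0))/3 + (3:ℝ)⁻¹ ^ t.length / 3) := by
      rw [cube, val_cons, hlen]
    rw [hcube, hmap _ measurableSet_Icc, preimage_div_Icc, preimage_aff_Icc]
    have e1 : 3 * ((val t + if b then 2 else 0)/3) = val t + if b then 2 else 0 := by ring
    have e2 : 3 * ((val t + (if b then 2 else 0))/3 + (3:ℝ)⁻¹ ^ t.length / 3)
        = val t + (if b then 2 else 0) + (3:ℝ)⁻¹ ^ t.length := by ring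
    rw [e1, e2]
    have hvt0 := val_nonneg t
    have hvt1 := val_add_le_one t
    cases b
    · simp only [if_neg Bool.false_ne_true, add_zero]
      have hz : μ (Set.Icc (val t - 2) (val t + (3:ℝ)⁻¹ ^ t.length - 2)) = 0 := by
        refine mu_null_disj hp₁ hp₂ hsum hKcompact hKne hKself hμK hμself ?_
        intro x hx hxK
        have := (hsub hxK).1
        have := hx.2
        linarith
      rw [hz, mul_zero, add_zero, show Set.Icc (val t) (val t + (3:ℝ)⁻¹ ^ t.length) = cube t from rfl,
        ih, wt_cons, if_neg Bool.false_ne_true,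
        ENNReal.ofReal_mul hp₁.le]
    · simp only [if_pos]
      have hz : μ (Set.Icc (val t + 2) (val t + 2 + (3:ℝ)⁻¹ ^ t.length)) = 0 := by
        refine mu_null_disj hp₁ hp₂ hsum hKcompact hKne hKself hμK hμself ?_
        intro x hx hxK
        have := (hsub hxK).2
        have := hx.1
        linarith
      have e3 : Set.Icc (val t + 2 - 2) (val t + 2 + (3:ℝ)⁻¹ ^ t.length - 2) = cube t := by
        rw [cube]; congr 1 <;> ring
      rw [e3, hz, mul_zero, zero_add, ih, wt_cons, if_pos rfl, ENNReal.ofReal_mul hp₂.le]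

lemma mu_noatoms : ∀ x : ℝ, μ {x} = 0 := by
  intro x
  by_cases hx : x ∈ K
  · set c := max p₁ p₂ with hc
    have hc0 : 0 ≤ c := le_max_of_le_left hp₁.le
    have hc1 : c < 1 := by
      rw [hc, max_lt_iff]; constructor <;> linarith
    have hk : ∀ k : ℕ, μ {x} ≤ ENNReal.ofReal (c ^ k) := by
      intro k
      obtain ⟨w, hw, hxw⟩ := cover hKcompact hKne hKself k x hx
      calc μ {x} ≤ μ (cube w) := measure_mono (by simpa using hxw)
        _ = ENNReal.ofReal (wt p₁ p₂ w) := mu_cube hp₁ hp₂ hsum hKcompact hKne hKself hμK hμself w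
        _ ≤ ENNReal.ofReal (c ^ k) := by
            exact ENNReal.ofReal_le_ofReal (mem_words.1 hw ▸ wt_le hp₁ hp₂ w)
    have htend : Tendsto (fun k : ℕ => ENNReal.ofReal (c ^ k)) atTop (𝓝 0) := by
      have := tendsto_pow_atTop_nhds_zero_of_lt_one hc0 hc1
      have h2 := (ENNReal.continuous_ofReal.tendsto 0).comp this
      simpa [Function.comp_def] using h2
    exact le_antisymm (ge_of_tendsto' htend hk) (zero_le)
  · exact le_antisymm (le_trans (measure_mono (by simpa using hx))
      (le_of_eq (mu_compl hp₁ hp₂ hsum hKcompact hKne hKself hμK hμself))) (zero_le)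

end
end ABB14

namespace ABB14

lemma cube_take (w : List Bool) (m : ℕ) : cube w ⊆ cube (w.take m) := by
  conv_lhs => rw [← List.take_append_drop m w]
  exact cube_subset_prefix _ _

section
set_option linter.unusedSectionVars false
variable {T : ℝ → ℝ} (hT : ∀ x, T x = Int.fract (3 * x))
include hT

lemma T_iter' (n : ℕ) (x : ℝ) (hn : n ≠ 0) : T^[n] x = Int.fract ((3:ℝ) ^ n * x) := by
  induction n with
  | zero => simp at hn
  | succ n ih =>
    rcases Nat.eq_zero_or_pos n with rfl | hpos
    · simp [hT, pow_one]
    · rw [Function.iterate_succ_apply', ih hpos.ne', hT]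
      have : (3:ℝ) * Int.fract ((3:ℝ)^n * x) = 3 * ((3:ℝ)^n * x) - (3 * ⌊(3:ℝ)^n * x⌋ : ℤ) := by
        rw [Int.fract]; push_cast; ring
      rw [this, Int.fract_sub_intCast]
      ring_nf

lemma shift {w : List Bool} {x : ℝ} (hx : x ∈ cube w)
    (hxE : ∀ (j : ℕ) (z : ℤ), (3:ℝ)^j * x ≠ z) (n : ℕ) (hn : n ≤ w.length) :
    T^[n] x ∈ cube (w.drop n) := by
  rcases Nat.eq_zero_or_pos n with rfl | hpos
  · simpa using hx
  rw [T_iter' hT n x hpos.ne']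
  set u := w.take n with hu
  set d := w.drop n with hd
  have hul : u.length = n := by rw [hu, List.length_take]; omega
  have hdl : d.length = w.length - n := by rw [hd, List.length_drop]
  have hw : w = u ++ d := (List.take_append_drop n w).symm
  have hval : val w = val u + (3:ℝ)⁻¹ ^ n * val d := by
    rw [hw, val_append, hul]
  obtain ⟨z, hz⟩ := three_pow_val_int u
  rw [hul] at hz
  set t := (3:ℝ)^n * (x - val w) with ht
  have hxlo := hx.1
  have hxhi := hx.2
  have h3n : (0:ℝ) < (3:ℝ)^n := by positivity
  have ht0 : 0 ≤ t := by rw [ht]; nlinarith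
  have htle : t ≤ (3:ℝ)⁻¹ ^ d.length := by
    rw [ht, hdl]
    have hlen : ((3:ℝ))^n * (3:ℝ)⁻¹ ^ w.length = (3:ℝ)⁻¹ ^ (w.length - n) := by
      rw [show w.length = n + (w.length - n) by omega, pow_add]
      field_simp
      rw [Nat.add_sub_cancel_left, ← mul_pow]; norm_num
    nlinarith [hx.2, hx.1, hlen]
  have hinv : (3:ℝ)^n * (3:ℝ)⁻¹^n = 1 := by
    rw [← mul_pow]; norm_num
  have hyd : (3:ℝ)^n * x = z + (val d + t) := by
    rw [ht, hval]; linear_combination hz + val d * hinv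
  have hy1 : val d + t ≤ 1 := by
    have := val_add_le_one d
    linarith
  have hylt : val d + t < 1 := by
    rcases eq_or_lt_of_le hy1 with h | h
    · exfalso
      exact hxE n (z + 1) (by rw [hyd, h]; push_cast; ring)
    · exact h
  have : Int.fract ((3:ℝ)^n * x) = val d + t := by
    rw [hyd, add_comm (z:ℝ) _, Int.fract_add_intCast]
    exact Int.fract_eq_self.2 ⟨by linarith [val_nonneg d], hylt⟩
  rw [this]
  exact ⟨by linarith, by linarith⟩

lemma triple_subset {K : Set ℝ} (hKcompact : IsCompact K) (hKne : K.Nonempty)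
    (hKself : K = (fun x : ℝ => x / 3) '' K ∪ (fun x : ℝ => (x + 2) / 3) '' K)
    {m n : ℕ} (hmn : m ≤ n) {u : List Bool} (hu : u ∈ words m) :
    {x : ℝ | x ∈ cube u ∧ x ∈ K ∧ (∀ (j : ℕ) (z : ℤ), (3:ℝ)^j * x ≠ z) ∧ T^[n] x ∈ cube u}
      ⊆ ⋃ v ∈ words (n - m), cube (u ++ v ++ u) := by
  rintro x ⟨hxu, hxK, hxE, hTx⟩
  obtain ⟨w, hw, hxw⟩ := cover hKcompact hKne hKself (n + m) x hxK
  have hwl : w.length = n + m := mem_words.1 hw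
  have hul : u.length = m := mem_words.1 hu
  have htake : w.take m = u := by
    have h1 : x ∈ cube (w.take m) := cube_take w m hxw
    by_contra hne
    exact Set.disjoint_left.1
      (cube_disjoint _ _ (by rw [List.length_take]; omega) hne) h1 hxu
  have hdrop : w.drop n = u := by
    have h1 : T^[n] x ∈ cube (w.drop n) := shift hT hxw hxE n (by omega)
    by_contra hne
    exact Set.disjoint_left.1
      (cube_disjoint _ _ (by rw [List.length_drop]; omega) hne) h1 hTx
  set v := (w.take n).drop m with hv
  have hvl : v.length = n - m := by rw [hv, List.length_drop, List.length_take]; omega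
  have hweq : w = u ++ v ++ u := by
    conv_lhs => rw [← List.take_append_drop n w, hdrop]
    congr 1
    conv_lhs => rw [← List.take_append_drop m (w.take n), List.take_take, min_eq_left hmn, htake]
  refine Set.mem_biUnion (mem_words.2 hvl) ?_
  rwa [← hweq]

end

lemma exists_chernoff {p₁ p₂ c : ℝ} (hp₁ : 0 < p₁) (hp₂ : 0 < p₂) (hsum : p₁ + p₂ = 1)
    (hc : p₁ * Real.log p₁ + p₂ * Real.log p₂ + c < 0) :
    ∃ s : ℝ, 0 < s ∧ (p₁ ^ (1+s) + p₂ ^ (1+s)) * Real.exp (s * c) < 1 := by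
  set G : ℝ → ℝ := fun s => (p₁ * Real.exp (s * Real.log p₁) + p₂ * Real.exp (s * Real.log p₂)) *
    Real.exp (s * c) with hG
  have hG0 : G 0 = 1 := by simp [hG]; linarith
  have hGr : ∀ s, (p₁ ^ (1+s) + p₂ ^ (1+s)) * Real.exp (s * c) = G s := by
    intro s
    have e : ∀ p : ℝ, 0 < p → p ^ (1+s) = p * Real.exp (s * Real.log p) := by
      intro p hp
      rw [Real.rpow_def_of_pos hp, mul_add, mul_one, Real.exp_add, mul_comm s (Real.log p), Real.exp_log hp]
    rw [hG, e p₁ hp₁, e p₂ hp₂]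
  set D : ℝ := p₁ * Real.log p₁ + p₂ * Real.log p₂ + c with hD
  have hderiv : HasDerivAt G D 0 := by
    have h1 : ∀ a : ℝ, HasDerivAt (fun s : ℝ => Real.exp (s * a)) a 0 := by
      intro a
      have := ((hasDerivAt_id (0:ℝ)).mul_const a).exp
      simpa using this
    have h2 : HasDerivAt (fun s => p₁ * Real.exp (s * Real.log p₁) + p₂ * Real.exp (s * Real.log p₂))
        (p₁ * Real.log p₁ + p₂ * Real.log p₂) 0 :=
      ((h1 (Real.log p₁)).const_mul p₁).add ((h1 (Real.log p₂)).const_mul p₂)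
    have h3 := h2.mul (h1 c)
    simp only [Real.exp_zero, mul_one, mul_zero, zero_mul] at h3
    have hD' : D = p₁ * Real.log p₁ + p₂ * Real.log p₂ + (p₁ + p₂) * c := by
      rw [hD]
      linear_combination (-c) * hsum
    rw [hD']; exact h3
  have hslope : Tendsto (slope G 0) (𝓝[>] 0) (𝓝 D) :=
    (hasDerivAt_iff_tendsto_slope.1 hderiv).mono_left
      (nhdsWithin_mono _ (fun x hx => ne_of_gt hx))
  have hev : ∀ᶠ s in 𝓝[>] (0:ℝ), slope G 0 s < 0 :=
    hslope.eventually_lt_const hc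
  obtain ⟨s, hs1, hs2⟩ := (hev.and self_mem_nhdsWithin).exists
  refine ⟨s, hs2, ?_⟩
  rw [hGr]
  rw [slope_def_field, div_neg_iff] at hs1
  rcases hs1 with ⟨_, hden⟩ | ⟨hnum, _⟩
  · linarith
  · linarith [hG0 ▸ hnum]

end ABB14

namespace ABB14

def Ebad : Set ℝ := {x | ∃ (j : ℕ) (z : ℤ), (3:ℝ)^j * x = z}

lemma Ebad_countable : Ebad.Countable := by
  have hsub : Ebad ⊆ ⋃ (j : ℕ), ⋃ (z : ℤ), {((z:ℝ) / 3^j)} := by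
    rintro x ⟨j, z, hz⟩
    refine Set.mem_iUnion.2 ⟨j, Set.mem_iUnion.2 ⟨z, ?_⟩⟩
    have h3 : (3:ℝ)^j ≠ 0 := by positivity
    rw [Set.mem_singleton_iff, eq_div_iff h3]
    linarith [hz]
  exact Set.Countable.mono hsub
    (Set.countable_iUnion fun j => Set.countable_iUnion fun z => Set.countable_singleton _)

lemma measurable_cube (w : List Bool) : MeasurableSet (cube w) := by
  unfold cube; exact measurableSet_Icc

lemma sum_wt_one {p₁ p₂ : ℝ} (hp₁ : 0 < p₁) (hp₂ : 0 < p₂) (hsum : p₁ + p₂ = 1) (k : ℕ) :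
    ∑ w ∈ words k, wt p₁ p₂ w = 1 := by
  have h := sum_wt_rpow hp₁ hp₂ 1 k
  simp only [Real.rpow_one] at h
  rw [h, hsum, one_pow]

lemma sum_wt_sq {p₁ p₂ : ℝ} (hp₁ : 0 < p₁) (hp₂ : 0 < p₂) (k : ℕ) :
    ∑ w ∈ words k, wt p₁ p₂ w ^ (2:ℕ) = (p₁^(2:ℕ) + p₂^(2:ℕ)) ^ k := by
  have h := sum_wt_rpow hp₁ hp₂ ((2:ℕ):ℝ) k
  simpa only [Real.rpow_natCast] using h

lemma notin_Ebad {x : ℝ} (hx : x ∉ Ebad) : ∀ (j : ℕ) (z : ℤ), (3:ℝ)^j * x ≠ z := by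
  intro j z h
  exact hx ⟨j, z, h⟩

section
set_option linter.unusedSectionVars false
variable {p₁ p₂ : ℝ} (hp₁ : 0 < p₁) (hp₂ : 0 < p₂) (hsum : p₁ + p₂ = 1)
  {K : Set ℝ} (hKcompact : IsCompact K) (hKne : K.Nonempty)
  (hKself : K = (fun x : ℝ => x / 3) '' K ∪ (fun x : ℝ => (x + 2) / 3) '' K)
  {μ : Measure ℝ} [IsProbabilityMeasure μ] (hμK : μ K = 1)
  (hμself : μ = ENNReal.ofReal p₁ • μ.map (fun x : ℝ => x / 3) +
      ENNReal.ofReal p₂ • μ.map (fun x : ℝ => (x + 2) / 3))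
  {T : ℝ → ℝ} (hT : ∀ x, T x = Int.fract (3 * x))
include hp₁ hp₂ hsum hKcompact hKne hKself hμK hμself hT

lemma mu_Ebad : μ Ebad = 0 := by
  haveI : NullSingletonClass μ := ⟨mu_noatoms hp₁ hp₂ hsum hKcompact hKne hKself hμK hμself⟩
  exact Ebad_countable.measure_zero μ

lemma mu_R_lower {n mm : ℕ} (hn : mm + 1 ≤ n) :
    ENNReal.ofReal ((p₁^2 + p₂^2) ^ (mm+1)) ≤
      μ {x : ℝ | x ∈ K ∧ T^[n] x ∈ Metric.ball x ((3:ℝ)⁻¹ ^ mm)} := by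
  classical
  set k := mm + 1 with hk
  set W : Finset (List Bool) :=
    ((words k) ×ˢ (words (n - k))).image (fun p => p.1 ++ p.2 ++ p.1) with hW
  have hmemW : ∀ w ∈ W, ∃ u v, u ∈ words k ∧ v ∈ words (n - k) ∧ w = u ++ v ++ u := by
    intro w hw
    obtain ⟨⟨u, v⟩, huv, rfl⟩ := Finset.mem_image.1 hw
    exact ⟨u, v, (Finset.mem_product.1 huv).1, (Finset.mem_product.1 huv).2, rfl⟩
  have hWlen : ∀ w ∈ W, w.length = n + k := by
    intro w hw
    obtain ⟨u, v, hu, hv, rfl⟩ := hmemW w hw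
    simp only [List.length_append]
    rw [mem_words.1 hu, mem_words.1 hv]
    omega
  -- measure of the union
  have hdisj : (W : Set (List Bool)).PairwiseDisjoint cube := by
    intro a ha b hb hab
    exact cube_disjoint a b (by rw [hWlen a ha, hWlen b hb]) hab
  have hUnion : μ (⋃ w ∈ W, cube w) = ∑ w ∈ W, μ (cube w) :=
    measure_biUnion_finset hdisj (fun w _ => measurable_cube w)
  have hinj : ∀ p ∈ (words k) ×ˢ (words (n - k)), ∀ q ∈ (words k) ×ˢ (words (n - k)),
      (fun p : List Bool × List Bool => p.1 ++ p.2 ++ p.1) p =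
      (fun p : List Bool × List Bool => p.1 ++ p.2 ++ p.1) q → p = q := by
    rintro ⟨u, v⟩ huv ⟨u', v'⟩ huv' h
    simp only at h
    have hu : u ∈ words k := (Finset.mem_product.1 huv).1
    have hv : v ∈ words (n-k) := (Finset.mem_product.1 huv).2
    have hu' : u' ∈ words k := (Finset.mem_product.1 huv').1
    have hv' : v' ∈ words (n-k) := (Finset.mem_product.1 huv').2
    have h1 : u = u' := by
      have e1 : (u ++ v ++ u).take k = u := by
        rw [List.append_assoc]; exact List.take_left' (mem_words.1 hu)
      have e2 : (u' ++ v' ++ u').take k = u' := by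
        rw [List.append_assoc]; exact List.take_left' (mem_words.1 hu')
      rw [← e1, ← e2, h]
    subst h1
    have h2 : u ++ v = u ++ v' := by
      have e1 : (u ++ v ++ u).take (k + (n - k)) = u ++ v := by
        exact List.take_left' (by rw [List.length_append, mem_words.1 hu, mem_words.1 hv])
      have e2 : (u ++ v' ++ u).take (k + (n - k)) = u ++ v' := by
        exact List.take_left' (by rw [List.length_append, mem_words.1 hu, mem_words.1 hv'])
      rw [← e1, ← e2, h]
    rw [List.append_cancel_left h2]
  have hsum_val : ∑ w ∈ W, μ (cube w) = ENNReal.ofReal ((p₁^2 + p₂^2) ^ k) := by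
    rw [hW, Finset.sum_image hinj]
    have e : ∀ p ∈ (words k) ×ˢ (words (n - k)),
        μ (cube (p.1 ++ p.2 ++ p.1)) = ENNReal.ofReal (wt p₁ p₂ p.1 ^ 2 * wt p₁ p₂ p.2) := by
      rintro ⟨u, v⟩ _
      rw [mu_cube hp₁ hp₂ hsum hKcompact hKne hKself hμK hμself, wt_append, wt_append]
      congr 1
      ring
    rw [Finset.sum_congr rfl e]
    rw [← ENNReal.ofReal_sum_of_nonneg (by
      rintro ⟨u, v⟩ _
      have := wt_pos hp₁ hp₂ u
      have := wt_pos hp₁ hp₂ v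
      positivity)]
    congr 1
    rw [Finset.sum_product]
    have : ∀ u ∈ words k, ∑ v ∈ words (n - k), wt p₁ p₂ u ^ 2 * wt p₁ p₂ v
        = wt p₁ p₂ u ^ 2 := by
      intro u _
      rw [← Finset.mul_sum, sum_wt_one hp₁ hp₂ hsum _, mul_one]
    rw [Finset.sum_congr rfl this, sum_wt_sq hp₁ hp₂]
  -- inclusion
  have hincl : ((⋃ w ∈ W, cube w) ∩ K) \ Ebad ⊆
      {x : ℝ | x ∈ K ∧ T^[n] x ∈ Metric.ball x ((3:ℝ)⁻¹ ^ mm)} := by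
    rintro x ⟨⟨hxU, hxK⟩, hxE⟩
    obtain ⟨w, hwW, hxw⟩ := Set.mem_iUnion₂.1 hxU
    obtain ⟨u, v, hu, hv, rfl⟩ := hmemW w hwW
    have hul : u.length = k := mem_words.1 hu
    have hvl : v.length = n - k := mem_words.1 hv
    have hxu : x ∈ cube u := by
      have h1 := cube_take (u ++ v ++ u) k hxw
      rwa [List.append_assoc, List.take_left' hul] at h1
    have hTu : T^[n] x ∈ cube u := by
      have hlen : (u ++ v ++ u).length = n + k := hWlen _ hwW
      have h1 := shift hT hxw (notin_Ebad hxE) n (by omega)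
      rwa [List.drop_left' (by rw [List.length_append, hul, hvl]; omega)] at h1
    refine ⟨hxK, ?_⟩
    rw [Metric.mem_ball, Real.dist_eq]
    have h1 := hxu.1
    have h2 := hxu.2
    have h3 := hTu.1
    have h4 := hTu.2
    have habs : |T^[n] x - x| ≤ (3:ℝ)⁻¹ ^ k := abs_sub_le_iff.2 ⟨by rw [hul] at *; linarith,
      by rw [hul] at *; linarith⟩
    have hlt : (3:ℝ)⁻¹ ^ k < (3:ℝ)⁻¹ ^ mm := by
      rw [hk, pow_succ]
      have : (0:ℝ) < (3:ℝ)⁻¹ ^ mm := by positivity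
      nlinarith
    linarith
  calc ENNReal.ofReal ((p₁^2 + p₂^2) ^ k)
      = μ (((⋃ w ∈ W, cube w) ∩ K) \ Ebad) := by
        rw [measure_diff_null (mu_Ebad hp₁ hp₂ hsum hKcompact hKne hKself hμK hμself hT),
          mu_inter_K hp₁ hp₂ hsum hKcompact hKne hKself hμK hμself, hUnion, hsum_val]
    _ ≤ _ := measure_mono hincl


lemma mu_good_upper {θ : ℝ} (hθ : 0 ≤ θ) {mm n : ℕ} (hmn : mm ≤ n) :
    μ ({x : ℝ | x ∈ K ∧ T^[n] x ∈ Metric.ball x ((3:ℝ)⁻¹ ^ mm)} ∩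
      ⋃ u ∈ (words mm).filter (fun u => wt p₁ p₂ u ≤ θ^mm), cube u) ≤
      ENNReal.ofReal (θ^mm) := by
  classical
  set Wg := (words mm).filter (fun u => wt p₁ p₂ u ≤ θ^mm) with hWg
  have hsubset : {x : ℝ | x ∈ K ∧ T^[n] x ∈ Metric.ball x ((3:ℝ)⁻¹ ^ mm)} ∩ (⋃ u ∈ Wg, cube u)
      ⊆ Ebad ∪ ⋃ u ∈ Wg, ⋃ v ∈ words (n - mm), cube (u ++ v ++ u) := by
    rintro x ⟨⟨hxK, hball⟩, hxG⟩
    by_cases hxE : x ∈ Ebad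
    · exact Or.inl hxE
    right
    obtain ⟨u, huWg, hxu⟩ := Set.mem_iUnion₂.1 hxG
    have hu : u ∈ words mm := (Finset.mem_filter.1 huWg).1
    have hTK : T^[n] x ∈ K := T_iter_mem_K hKcompact hKne hKself hT n x hxK
    have hdist : |x - T^[n] x| < (3:ℝ)⁻¹ ^ mm := by
      rw [Metric.mem_ball, Real.dist_eq] at hball
      rw [abs_sub_comm]; exact hball
    obtain ⟨w₀, hw₀, hxw₀, hTw₀⟩ := separation hKcompact hKne hKself mm x hxK _ hTK hdist
    have huw : u = w₀ := by
      by_contra hne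
      exact Set.disjoint_left.1
        (cube_disjoint u w₀ (by rw [mem_words.1 hu, mem_words.1 hw₀]) hne) hxu hxw₀
    have hTu : T^[n] x ∈ cube u := huw ▸ hTw₀
    have hmem := triple_subset hT hKcompact hKne hKself hmn hu
      ⟨hxu, hxK, notin_Ebad hxE, hTu⟩
    exact Set.mem_biUnion huWg hmem
  have hwt_nonneg : ∀ u ∈ Wg, 0 ≤ wt p₁ p₂ u := fun u _ => (wt_pos hp₁ hp₂ u).le
  have hθmm : 0 ≤ θ ^ mm := pow_nonneg hθ mm
  calc μ ({x : ℝ | x ∈ K ∧ T^[n] x ∈ Metric.ball x ((3:ℝ)⁻¹ ^ mm)} ∩ ⋃ u ∈ Wg, cube u)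
      ≤ μ (Ebad ∪ ⋃ u ∈ Wg, ⋃ v ∈ words (n - mm), cube (u ++ v ++ u)) := measure_mono hsubset
    _ ≤ μ Ebad + μ (⋃ u ∈ Wg, ⋃ v ∈ words (n - mm), cube (u ++ v ++ u)) := measure_union_le _ _
    _ = μ (⋃ u ∈ Wg, ⋃ v ∈ words (n - mm), cube (u ++ v ++ u)) := by
        rw [mu_Ebad hp₁ hp₂ hsum hKcompact hKne hKself hμK hμself hT, zero_add]
    _ ≤ ∑ u ∈ Wg, μ (⋃ v ∈ words (n - mm), cube (u ++ v ++ u)) := measure_biUnion_finset_le _ _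
    _ ≤ ∑ u ∈ Wg, ENNReal.ofReal (θ^mm * wt p₁ p₂ u) := by
        refine Finset.sum_le_sum fun u hu => ?_
        have hwtu := (Finset.mem_filter.1 hu).2
        calc μ (⋃ v ∈ words (n - mm), cube (u ++ v ++ u))
            ≤ ∑ v ∈ words (n - mm), μ (cube (u ++ v ++ u)) := measure_biUnion_finset_le _ _
          _ = ENNReal.ofReal (wt p₁ p₂ u ^ 2) := by
              have e : ∀ v ∈ words (n - mm), μ (cube (u ++ v ++ u)) =
                  ENNReal.ofReal (wt p₁ p₂ u ^ 2 * wt p₁ p₂ v) := by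
                intro v _
                rw [mu_cube hp₁ hp₂ hsum hKcompact hKne hKself hμK hμself, wt_append, wt_append]
                congr 1
                ring
              rw [Finset.sum_congr rfl e, ← ENNReal.ofReal_sum_of_nonneg (fun v _ => by
                have := wt_pos hp₁ hp₂ u
                have := wt_pos hp₁ hp₂ v
                positivity), ← Finset.mul_sum, sum_wt_one hp₁ hp₂ hsum, mul_one]
          _ ≤ ENNReal.ofReal (θ^mm * wt p₁ p₂ u) := by
              apply ENNReal.ofReal_le_ofReal
              have := wt_pos hp₁ hp₂ u
              nlinarith
    _ = ENNReal.ofReal (θ^mm * ∑ u ∈ Wg, wt p₁ p₂ u) := by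
        rw [Finset.mul_sum, ← ENNReal.ofReal_sum_of_nonneg (fun u _ =>
          mul_nonneg hθmm (wt_pos hp₁ hp₂ u).le)]
    _ ≤ ENNReal.ofReal (θ^mm) := by
        apply ENNReal.ofReal_le_ofReal
        have h1 : ∑ u ∈ Wg, wt p₁ p₂ u ≤ ∑ u ∈ words mm, wt p₁ p₂ u :=
          Finset.sum_le_sum_of_subset_of_nonneg (Finset.filter_subset _ _)
            (fun u _ _ => (wt_pos hp₁ hp₂ u).le)
        rw [sum_wt_one hp₁ hp₂ hsum] at h1
        nlinarith [hθmm]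

lemma mu_bad_upper {c s : ℝ} (hs : 0 < s) (mm : ℕ) :
    μ (K \ ⋃ u ∈ (words mm).filter (fun u => wt p₁ p₂ u ≤ Real.exp (-c) ^ mm), cube u) ≤
      ENNReal.ofReal (((p₁^(1+s) + p₂^(1+s)) * Real.exp (s * c)) ^ mm) := by
  classical
  set θm : ℝ := Real.exp (-c) ^ mm with hθm
  have hθm0 : 0 < θm := by positivity
  set Wb := (words mm).filter (fun u => ¬ wt p₁ p₂ u ≤ θm) with hWb
  have hsubset : K \ (⋃ u ∈ (words mm).filter (fun u => wt p₁ p₂ u ≤ θm), cube u) ⊆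
      ⋃ u ∈ Wb, cube u := by
    rintro x ⟨hxK, hxG⟩
    obtain ⟨u, hu, hxu⟩ := cover hKcompact hKne hKself mm x hxK
    by_cases hwt : wt p₁ p₂ u ≤ θm
    · exact absurd (Set.mem_biUnion (Finset.mem_filter.2 ⟨hu, hwt⟩) hxu) hxG
    · exact Set.mem_biUnion (Finset.mem_filter.2 ⟨hu, hwt⟩) hxu
  have key : ∑ u ∈ Wb, wt p₁ p₂ u ≤ ((p₁^(1+s) + p₂^(1+s)) * Real.exp (s * c)) ^ mm := by
    have step1 : ∀ u ∈ Wb, wt p₁ p₂ u ≤ wt p₁ p₂ u ^ (1+s) / θm ^ s := by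
      intro u hu
      have hbad : θm < wt p₁ p₂ u := not_le.1 (Finset.mem_filter.1 hu).2
      have hw0 := wt_pos hp₁ hp₂ u
      have h1 : θm ^ s ≤ wt p₁ p₂ u ^ s := Real.rpow_le_rpow hθm0.le hbad.le hs.le
      have h2 : wt p₁ p₂ u ^ (1+s) = wt p₁ p₂ u * wt p₁ p₂ u ^ s := by
        rw [Real.rpow_add hw0, Real.rpow_one]
      rw [h2, le_div_iff₀ (Real.rpow_pos_of_pos hθm0 s)]
      have h3 : 0 < wt p₁ p₂ u ^ s := Real.rpow_pos_of_pos hw0 s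
      nlinarith
    have step2 : ∑ u ∈ Wb, wt p₁ p₂ u ≤ (∑ u ∈ words mm, wt p₁ p₂ u ^ (1+s)) / θm ^ s := by
      rw [Finset.sum_div]
      calc ∑ u ∈ Wb, wt p₁ p₂ u ≤ ∑ u ∈ Wb, wt p₁ p₂ u ^ (1+s) / θm ^ s :=
            Finset.sum_le_sum step1
        _ ≤ ∑ u ∈ words mm, wt p₁ p₂ u ^ (1+s) / θm ^ s :=
            Finset.sum_le_sum_of_subset_of_nonneg (Finset.filter_subset _ _) (fun u _ _ => by
              have := wt_pos hp₁ hp₂ u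
              have := Real.rpow_pos_of_pos this (1+s)
              have := Real.rpow_pos_of_pos hθm0 s
              positivity)
    rw [sum_wt_rpow hp₁ hp₂ (1+s) mm] at step2
    have hθms : θm ^ s = Real.exp (-(c * mm * s)) := by
      rw [hθm, ← Real.exp_nat_mul, ← Real.exp_mul]
      ring_nf
    have hfin : (p₁^(1+s) + p₂^(1+s)) ^ mm / θm ^ s =
        ((p₁^(1+s) + p₂^(1+s)) * Real.exp (s * c)) ^ mm := by
      rw [hθms, mul_pow, ← Real.exp_nat_mul, Real.exp_neg, div_eq_mul_inv, inv_inv]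
      congr 2
      ring
    rw [hfin] at step2
    exact step2
  calc μ (K \ ⋃ u ∈ (words mm).filter (fun u => wt p₁ p₂ u ≤ θm), cube u)
      ≤ μ (⋃ u ∈ Wb, cube u) := measure_mono hsubset
    _ ≤ ∑ u ∈ Wb, μ (cube u) := measure_biUnion_finset_le _ _
    _ = ENNReal.ofReal (∑ u ∈ Wb, wt p₁ p₂ u) := by
        rw [Finset.sum_congr rfl (fun u _ =>
          mu_cube hp₁ hp₂ hsum hKcompact hKne hKself hμK hμself u),
          ← ENNReal.ofReal_sum_of_nonneg (fun u _ => (wt_pos hp₁ hp₂ u).le)]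
    _ ≤ _ := ENNReal.ofReal_le_ofReal key

end

end ABB14

set_option maxHeartbeats 2000000 in
open ABB14 in
/-- Example ABB: for a non-uniform Bernoulli measure on the middle-third Cantor set, the
expected zero-one criterion for recurrence fails: the measure sum diverges yet the recurrence
set is null. Here `K` is the attractor of the Cantor IFS and `μ` the associated
self-similar (Bernoulli) measure with weights `(p₁, p₂)`. -/
theorem stmt_14 (p₁ p₂ : ℝ) (hp₁ : 0 < p₁) (hp₂ : 0 < p₂) (hsum : p₁ + p₂ = 1) (hne : p₁ ≠ p₂)
    (K : Set ℝ) (hKcompact : IsCompact K) (hKne : K.Nonempty)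
    (hKself : K = (fun x : ℝ => x / 3) '' K ∪ (fun x : ℝ => (x + 2) / 3) '' K)
    (μ : Measure ℝ) [IsProbabilityMeasure μ] (hμK : μ K = 1)
    (hμself : μ = ENNReal.ofReal p₁ • μ.map (fun x : ℝ => x / 3) +
        ENNReal.ofReal p₂ • μ.map (fun x : ℝ => (x + 2) / 3))
    (T : ℝ → ℝ) (hT : ∀ x, T x = Int.fract (3 * x))
    (α : ℝ)
    (hαlow : 1 / (-(p₁ * Real.log p₁ + p₂ * Real.log p₂)) < α)
    (hαup : α < 1 / (-Real.log (p₁ ^ 2 + p₂ ^ 2)))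
    (ψ : ℕ → ℝ) (hψ : ∀ n, ψ n = (3 : ℝ) ^ (-⌊α * Real.log (n : ℝ)⌋))
    (R : ℕ → Set ℝ) (hR : ∀ n, R n = {x : ℝ | x ∈ K ∧ T^[n] x ∈ Metric.ball x (ψ n)}) :
    (∑' n, μ (R n)) = ⊤ ∧ μ (⋂ t : ℕ, ⋃ n, ⋃ (_ : t ≤ n), R n) = 0 := by
  classical
  -- basic constants
  have hp₁1 : p₁ < 1 := by linarith
  have hp₂1 : p₂ < 1 := by linarith
  set q : ℝ := p₁^2 + p₂^2 with hqdef
  have hq0 : 0 < q := by positivity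
  have hq1 : q < 1 := by nlinarith
  have hlogq : Real.log q < 0 := Real.log_neg hq0 hq1
  set H : ℝ := -(p₁ * Real.log p₁ + p₂ * Real.log p₂) with hHdef
  have hH0 : 0 < H := by
    have h1 : Real.log p₁ < 0 := Real.log_neg hp₁ hp₁1
    have h2 : Real.log p₂ < 0 := Real.log_neg hp₂ hp₂1
    rw [hHdef]; nlinarith
  have hα0 : 0 < α := lt_trans (by positivity) hαlow
  have hαH : 1 < α * H := by
    rw [div_lt_iff₀ hH0] at hαlow
    linarith
  have hαq : α * (-Real.log q) < 1 := by
    have h : 0 < -Real.log q := by linarith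
    rw [lt_div_iff₀ h] at hαup
    linarith
  -- the exponent function
  set mfun : ℕ → ℕ := fun n => (⌊α * Real.log (n:ℝ)⌋).toNat with hmfun
  have hflr : ∀ n : ℕ, 1 ≤ n → (⌊α * Real.log (n:ℝ)⌋ : ℤ) = (mfun n : ℤ) ∧
      ψ n = (3:ℝ)⁻¹ ^ (mfun n) := by
    intro n hn
    have hlog : 0 ≤ Real.log (n:ℝ) := Real.log_nonneg (by exact_mod_cast hn)
    have hnn : 0 ≤ α * Real.log (n:ℝ) := mul_nonneg hα0.le hlog
    have h1 : (⌊α * Real.log (n:ℝ)⌋ : ℤ) = (mfun n : ℤ) :=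
      (Int.toNat_of_nonneg (Int.floor_nonneg.2 hnn)).symm
    refine ⟨h1, ?_⟩
    rw [hψ n, h1, zpow_neg, zpow_natCast, inv_pow]
  have hm_le : ∀ n : ℕ, 1 ≤ n → (mfun n : ℝ) ≤ α * Real.log (n:ℝ) := by
    intro n hn
    have := Int.floor_le (α * Real.log (n:ℝ))
    rw [(hflr n hn).1] at this
    exact_mod_cast this
  have hm_ge : ∀ n : ℕ, 1 ≤ n → α * Real.log (n:ℝ) - 1 ≤ (mfun n : ℝ) := by
    intro n hn
    have := Int.lt_floor_add_one (α * Real.log (n:ℝ))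
    rw [(hflr n hn).1] at this
    push_cast at this
    linarith
  -- N₀ such that for n ≥ N₀, mfun n + 1 ≤ n and 1 ≤ n
  have hev : ∀ᶠ n : ℕ in atTop, mfun n + 1 ≤ n ∧ 1 ≤ n := by
    have hc : (0:ℝ) < 1/(2*α) := by positivity
    have h1 := Real.isLittleO_log_id_atTop.def hc
    have h2 := (tendsto_natCast_atTop_atTop (R := ℝ)).eventually h1
    filter_upwards [h2, eventually_ge_atTop 2] with n hn h2n
    have hn1 : (1:ℕ) ≤ n := by omega
    have hlogn : 0 ≤ Real.log (n:ℝ) := Real.log_nonneg (by exact_mod_cast hn1)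
    simp only [id_eq, Real.norm_eq_abs] at hn
    rw [abs_of_nonneg hlogn, abs_of_nonneg (by positivity : (0:ℝ) ≤ (n:ℝ))] at hn
    have hmn : (mfun n : ℝ) ≤ (n:ℝ)/2 := by
      have h3 := hm_le n hn1
      have : α * Real.log (n:ℝ) ≤ α * ((1/(2*α)) * n) :=
        mul_le_mul_of_nonneg_left hn hα0.le
      have h4 : α * ((1/(2*α)) * (n:ℝ)) = n/2 := by field_simp
      linarith
    constructor
    · have h5 : ((mfun n : ℝ)) + 1 ≤ (n:ℝ) := by
        have h6 : (2:ℝ) ≤ (n:ℝ) := by exact_mod_cast h2n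
        linarith
      exact_mod_cast h5
    · exact hn1
  obtain ⟨N₀, hN₀⟩ := eventually_atTop.1 hev
  constructor
  -- PART 1 : divergence
  · set t : ℝ := α * (-Real.log q) with htdef
    have ht0 : 0 < t := by
      have : 0 < -Real.log q := by linarith
      positivity
    have hbound : ∀ j : ℕ,
        ENNReal.ofReal (q * ((j + N₀ : ℕ):ℝ) ^ (-t)) ≤ μ (R (j + N₀)) := by
      intro j
      set n := j + N₀ with hn
      have hnN : N₀ ≤ n := by omega
      obtain ⟨hmn1, hn1⟩ := hN₀ n hnN
      have hRn : R n = {x : ℝ | x ∈ K ∧ T^[n] x ∈ Metric.ball x ((3:ℝ)⁻¹ ^ (mfun n))} := by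
        rw [hR n, (hflr n hn1).2]
      have hlow := mu_R_lower hp₁ hp₂ hsum hKcompact hKne hKself hμK hμself hT
        (n := n) (mm := mfun n) hmn1
      rw [← hRn] at hlow
      refine le_trans (ENNReal.ofReal_le_ofReal ?_) hlow
      -- q * n^(-t) ≤ q^(mfun n + 1)
      have hq_rpow : ((n:ℝ)) ^ (-t) = q ^ (α * Real.log (n:ℝ)) := by
        rw [Real.rpow_def_of_pos (by exact_mod_cast hn1 : (0:ℝ) < (n:ℝ)),
          Real.rpow_def_of_pos hq0]
        congr 1
        rw [htdef]
        ring
      have h1 : q ^ (α * Real.log (n:ℝ)) ≤ q ^ ((mfun n : ℝ)) :=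
        Real.rpow_le_rpow_of_exponent_ge hq0 hq1.le (hm_le n hn1)
      have h2 : q ^ ((mfun n : ℝ)) = q ^ (mfun n : ℕ) := Real.rpow_natCast q (mfun n)
      calc q * (n:ℝ) ^ (-t) = q * q ^ (α * Real.log (n:ℝ)) := by rw [hq_rpow]
        _ ≤ q * q ^ (mfun n : ℕ) := by
            rw [← h2]
            exact mul_le_mul_of_nonneg_left h1 hq0.le
        _ = q ^ (mfun n + 1) := by rw [pow_succ]; ring
    have hdiv : ∑' j : ℕ, ENNReal.ofReal (q * ((j + N₀ : ℕ):ℝ) ^ (-t)) = ⊤ := by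
      by_contra h
      have hsummable := ENNReal.summable_toReal h
      have heq : ∀ j : ℕ, (ENNReal.ofReal (q * ((j + N₀ : ℕ):ℝ) ^ (-t))).toReal
          = q * ((j + N₀ : ℕ):ℝ) ^ (-t) := by
        intro j
        refine ENNReal.toReal_ofReal ?_
        have : (0:ℝ) ≤ ((j + N₀:ℕ):ℝ) ^ (-t) := Real.rpow_nonneg (by positivity) _
        positivity
      rw [funext heq] at hsummable
      have h2 : Summable (fun j : ℕ => ((j + N₀ : ℕ):ℝ) ^ (-t)) := by
        have := hsummable.mul_left q⁻¹
        simpa [← mul_assoc, inv_mul_cancel₀ hq0.ne'] using this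
      have h3 : Summable (fun n : ℕ => (n:ℝ) ^ (-t)) :=
        (summable_nat_add_iff N₀).1 h2
      have h4 := Real.summable_nat_rpow.1 h3
      linarith
    have h5 : ∑' j : ℕ, μ (R (j + N₀)) = ⊤ :=
      top_le_iff.1 (hdiv ▸ ENNReal.tsum_le_tsum hbound)
    have h6 : ∑' j : ℕ, μ (R (j + N₀)) ≤ ∑' n, μ (R n) :=
      ENNReal.tsum_comp_le_tsum_of_injective (add_left_injective N₀) _
    exact top_le_iff.1 (h5 ▸ h6)
  -- PART 2 : null recurrence set
  · set ε : ℝ := (α * H - 1) / (2 * α) with hεdef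
    have hε0 : 0 < ε := by
      rw [hεdef]
      exact div_pos (by linarith) (by linarith)
    set c : ℝ := H - ε with hcdef
    have hαc : α * c = (α * H + 1) / 2 := by
      rw [hcdef, hεdef]
      field_simp
      ring
    have hαH' : 1 < α * H := hαH
    have hαc1 : 1 < α * c := by
      rw [hαc, lt_div_iff₀ (by norm_num : (0:ℝ) < 2)]
      linarith [hαH']
    have hc0 : 0 < c := by nlinarith
    obtain ⟨s, hs0, hρ1⟩ := exists_chernoff hp₁ hp₂ hsum
      (show p₁ * Real.log p₁ + p₂ * Real.log p₂ + c < 0 by rw [hcdef, hHdef]; linarith)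
    set ρ : ℝ := (p₁ ^ (1+s) + p₂ ^ (1+s)) * Real.exp (s * c) with hρdef
    have hρ0 : 0 < ρ := by
      have := Real.rpow_pos_of_pos hp₁ (1+s)
      have := Real.rpow_pos_of_pos hp₂ (1+s)
      have := Real.exp_pos (s * c)
      positivity
    set θ : ℝ := Real.exp (-c) with hθdef
    have hθ0 : 0 < θ := Real.exp_pos _
    have hθ1 : θ < 1 := Real.exp_lt_one_iff.2 (by linarith)
    set Good : ℕ → Set ℝ := fun mm =>
      ⋃ u ∈ (words mm).filter (fun u => wt p₁ p₂ u ≤ θ ^ mm), cube u with hGood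
    set Bad : ℕ → Set ℝ := fun mm => K \ Good mm with hBad
    set A : ℕ → Set ℝ := fun n => R n ∩ Good (mfun n) with hA
    -- limsup of Bad is null
    have hBadsum : ∑' mm, μ (Bad mm) ≠ ⊤ := by
      have hb : ∀ mm, μ (Bad mm) ≤ ENNReal.ofReal (ρ ^ mm) := by
        intro mm
        have hlem := mu_bad_upper (c := c) hp₁ hp₂ hsum hKcompact hKne hKself hμK hμself hT hs0 mm
        rw [hρdef]
        simp only [hBad, hGood, hθdef]
        exact hlem
      have h1 : ∑' mm, μ (Bad mm) ≤ ∑' mm, ENNReal.ofReal (ρ ^ mm) :=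
        ENNReal.tsum_le_tsum hb
      have h2 : ∑' mm : ℕ, ENNReal.ofReal (ρ ^ mm) = (1 - ENNReal.ofReal ρ)⁻¹ := by
        rw [← ENNReal.tsum_geometric (ENNReal.ofReal ρ)]
        congr 1
        funext mm
        rw [ENNReal.ofReal_pow hρ0.le]
      have h3 : (1 - ENNReal.ofReal ρ)⁻¹ ≠ ⊤ := by
        rw [Ne, ENNReal.inv_eq_top, tsub_eq_zero_iff_le]
        exact not_le.2 (ENNReal.ofReal_lt_one.2 hρ1)
      exact ne_top_of_le_ne_top (h2 ▸ h3) h1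
    have hBadnull : μ (limsup Bad atTop) = 0 :=
      measure_limsup_atTop_eq_zero hBadsum
    -- limsup of A is null
    have hAsum : ∑' j, μ (A (j + N₀)) ≠ ⊤ := by
      have hb : ∀ j : ℕ, μ (A (j + N₀)) ≤
          ENNReal.ofReal (θ⁻¹ * ((j + N₀ : ℕ):ℝ) ^ (-(α * c))) := by
        intro j
        set n := j + N₀ with hn
        obtain ⟨hmn1, hn1⟩ := hN₀ n (by omega)
        have hRn : R n = {x : ℝ | x ∈ K ∧ T^[n] x ∈ Metric.ball x ((3:ℝ)⁻¹ ^ (mfun n))} := by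
          rw [hR n, (hflr n hn1).2]
        have hup := mu_good_upper hp₁ hp₂ hsum hKcompact hKne hKself hμK hμself hT
          (θ := θ) hθ0.le (mm := mfun n) (n := n) (by omega)
        rw [← hRn] at hup
        rw [hA]
        simp only [hGood]
        refine le_trans hup (ENNReal.ofReal_le_ofReal ?_)
        -- θ^(mfun n) ≤ θ⁻¹ * n^(-(αc))
        have h1 : (θ:ℝ) ^ (mfun n : ℕ) = θ ^ ((mfun n : ℝ)) :=
          (Real.rpow_natCast θ (mfun n)).symm
        have h2 : θ ^ ((mfun n : ℝ)) ≤ θ ^ (α * Real.log (n:ℝ) - 1) :=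
          Real.rpow_le_rpow_of_exponent_ge hθ0 hθ1.le (hm_ge n hn1)
        have h3 : θ ^ (α * Real.log (n:ℝ) - 1) = θ⁻¹ * ((n:ℝ)) ^ (-(α * c)) := by
          rw [Real.rpow_sub hθ0, Real.rpow_one, hθdef,
            Real.rpow_def_of_pos (by exact_mod_cast hn1 : (0:ℝ) < (n:ℝ)),
            ← Real.exp_mul]
          rw [div_eq_mul_inv, mul_comm]
          congr 2
          ring
        rw [h1]
        rw [h3] at h2
        exact h2
      have hsummable : Summable (fun j : ℕ => θ⁻¹ * ((j + N₀ : ℕ):ℝ) ^ (-(α * c))) := by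
        have h1 : Summable (fun n : ℕ => (n:ℝ) ^ (-(α * c))) :=
          Real.summable_nat_rpow.2 (by linarith)
        exact ((summable_nat_add_iff N₀).2 h1).mul_left θ⁻¹
      have hle : ∑' j, μ (A (j + N₀)) ≤
          ENNReal.ofReal (∑' j, θ⁻¹ * ((j + N₀ : ℕ):ℝ) ^ (-(α * c))) := by
        calc ∑' j, μ (A (j + N₀))
            ≤ ∑' j, ENNReal.ofReal (θ⁻¹ * ((j + N₀ : ℕ):ℝ) ^ (-(α * c))) :=
              ENNReal.tsum_le_tsum hb
          _ = ENNReal.ofReal (∑' j, θ⁻¹ * ((j + N₀ : ℕ):ℝ) ^ (-(α * c))) :=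
              (ENNReal.ofReal_tsum_of_nonneg (fun j => by
                have : (0:ℝ) ≤ ((j + N₀:ℕ):ℝ) ^ (-(α * c)) := Real.rpow_nonneg (by positivity) _
                positivity) hsummable).symm
      exact ne_top_of_le_ne_top ENNReal.ofReal_ne_top hle
    have hAnull : μ (limsup A atTop) = 0 := by
      have h0 : μ (limsup (fun j => A (j + N₀)) atTop) = 0 :=
        measure_limsup_atTop_eq_zero hAsum
      refine le_antisymm ?_ (zero_le)
      rw [← h0]
      refine measure_mono ?_
      intro x hx
      rw [mem_limsup_iff_frequently_mem] at hx ⊢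
      rw [frequently_atTop] at hx ⊢
      intro J
      obtain ⟨n, hn, hxn⟩ := hx (J + N₀)
      exact ⟨n - N₀, by omega, by rw [show n - N₀ + N₀ = n by omega]; exact hxn⟩
    -- m tends to infinity
    have hmtop : Tendsto mfun atTop atTop := by
      have h1 : Tendsto (fun n : ℕ => α * Real.log (n:ℝ)) atTop atTop :=
        (Real.tendsto_log_atTop.const_mul_atTop hα0).comp
          (tendsto_natCast_atTop_atTop (R := ℝ))
      have h2 := tendsto_nat_floor_atTop (α := ℝ) |>.comp h1
      have h3 : mfun = (fun x : ℝ => ⌊x⌋₊) ∘ (fun n : ℕ => α * Real.log (n:ℝ)) := by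
        funext n
        simp only [hmfun, Function.comp_apply, Int.floor_toNat]
      rwa [h3]
    -- inclusion of limsups
    have hincl : limsup R atTop ⊆ limsup A atTop ∪ limsup Bad atTop := by
      intro x hx
      rw [mem_limsup_iff_frequently_mem] at hx
      have h1 : ∃ᶠ n in atTop, x ∈ A n ∨ x ∈ Bad (mfun n) := by
        refine hx.mono fun n hn => ?_
        by_cases hg : x ∈ Good (mfun n)
        · exact Or.inl ⟨hn, hg⟩
        · have hxK : x ∈ K := by
            rw [hR n] at hn
            exact hn.1
          exact Or.inr ⟨hxK, hg⟩
      rcases frequently_or_distrib.1 h1 with h | h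
      · exact Or.inl (mem_limsup_iff_frequently_mem.2 h)
      · refine Or.inr (mem_limsup_iff_frequently_mem.2 ?_)
        rw [frequently_atTop]
        intro M
        rw [frequently_atTop] at h
        obtain ⟨N, hN⟩ := eventually_atTop.1 (hmtop.eventually_ge_atTop M)
        obtain ⟨n, hnN, hxn⟩ := h N
        exact ⟨mfun n, hN n hnN, hxn⟩
    -- conclusion
    have hset : (⋂ t : ℕ, ⋃ n, ⋃ (_ : t ≤ n), R n) = limsup R atTop := by
      rw [limsup_eq_iInf_iSup_of_nat]
      simp only [iSup_eq_iUnion, iInf_eq_iInter, ge_iff_le]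
    rw [hset]
    refine le_antisymm ?_ (zero_le)
    calc μ (limsup R atTop) ≤ μ (limsup A atTop ∪ limsup Bad atTop) := measure_mono hincl
      _ ≤ μ (limsup A atTop) + μ (limsup Bad atTop) := measure_union_le _ _
      _ = 0 := by rw [hAnull, hBadnull, add_zero]
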